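/- Let M ≥ 5 be an odd integer and let S, T be finite subsets of ℕ with 0 ∉ S ∩ T and |S| + |T| = M. Then φ_{S,T} ≥ (M−1)(2M²−7M+15)/24 + (M−1)(M−3)/4; in particular φ_{S,T} > (M−1)(2M²−7M+15)/24. -/

import Mathlib

/-- `φ_{S,T} = |S ∩ T| + Σ_{λ' < λ in S} min(λ,λ') + Σ_{μ' < μ in T} min(μ,μ')
  + Σ_{λ ∈ S, μ ∈ T} min(λ,μ)`. -/
def phiST (S T : Finset ℕ) : ℕ :=
  (S ∩ T).card
    + ∑ l ∈ S, ∑ l' ∈ S.filter (· < l), min l l'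
    + ∑ m ∈ T, ∑ m' ∈ T.filter (· < m), min m m'
    + ∑ l ∈ S, ∑ m ∈ T, min l m

open Finset

open Finset

/-- Sum over elements of the number of smaller elements equals `card.choose 2`. -/
lemma sum_card_filter_lt (A : Finset ℕ) :
    ∑ l ∈ A, (A.filter (· < l)).card = A.card.choose 2 := by
  induction A using Finset.induction_on_max with
  | empty => simp
  | insert a s ha ih =>
    have hna : a ∉ s := fun h => lt_irrefl a (ha a h)
    rw [Finset.sum_insert hna, Finset.card_insert_of_notMem hna]
    have h1 : (insert a s).filter (· < a) = s := by
      ext x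
      simp only [Finset.mem_filter, Finset.mem_insert]
      constructor
      · rintro ⟨hx | hx, hlt⟩
        · omega
        · exact hx
      · intro hx; exact ⟨Or.inr hx, ha x hx⟩
    have h2 : ∀ l ∈ s, (insert a s).filter (· < l) = s.filter (· < l) := by
      intro l hl
      ext x
      simp only [Finset.mem_filter, Finset.mem_insert]
      have hla := ha l hl
      constructor
      · rintro ⟨rfl | hx, hlt⟩
        · omega
        · exact ⟨hx, hlt⟩
      · intro hx; exact ⟨Or.inr hx.1, hx.2⟩
    rw [h1, Finset.sum_congr rfl (fun l hl => by rw [h2 l hl])]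
    rw [ih, Nat.choose_succ_succ, Nat.choose_one_right]

lemma indic_le (K a : ℕ) : ∑ t ∈ Icc 1 K, (if t ≤ a then 1 else 0) ≤ a := by
  rw [← Finset.card_filter]
  calc ((Icc 1 K).filter (fun t => t ≤ a)).card ≤ (Icc 1 a).card := by
        refine Finset.card_le_card ?_
        intro x hx
        simp only [Finset.mem_filter, Finset.mem_Icc] at hx ⊢
        omega
    _ = a := by rw [Nat.card_Icc]; omega

lemma choose_two_add (s u : ℕ) : s.choose 2 + u.choose 2 + s * u = (s + u).choose 2 := by
  induction u with
  | zero => simp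
  | succ n ih =>
    have h1 : (n + 1).choose 2 = n + n.choose 2 := by
      rw [Nat.choose_succ_succ, Nat.choose_one_right]
    have h2 : (s + (n + 1)).choose 2 = (s + n) + (s + n).choose 2 := by
      have : s + (n + 1) = (s + n) + 1 := by ring
      rw [this, Nat.choose_succ_succ, Nat.choose_one_right]
    have h3 : s * (n + 1) = s * n + s := by ring
    linarith [ih]

lemma pairs_ge (A : Finset ℕ) (K : ℕ) :
    ∑ t ∈ Icc 1 K, ((A.filter (fun x => t ≤ x)).card).choose 2
      ≤ ∑ l ∈ A, ∑ l' ∈ A.filter (· < l), min l l' := by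
  have key : ∀ t, ((A.filter (fun x => t ≤ x)).card).choose 2
      = ∑ l ∈ A, ∑ l' ∈ A.filter (· < l), (if t ≤ l' then 1 else 0) := by
    intro t
    rw [← sum_card_filter_lt (A.filter (fun x => t ≤ x))]
    have h1 : ∀ l : ℕ, ∑ l' ∈ A.filter (· < l), (if t ≤ l' then 1 else 0)
        = ((A.filter (fun x => t ≤ x)).filter (· < l)).card := by
      intro l
      rw [Finset.card_filter, Finset.sum_filter, Finset.sum_filter]
      refine Finset.sum_congr rfl fun x _ => ?_
      by_cases h1 : t ≤ x <;> by_cases h2 : x < l <;> simp [h1, h2]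
    have h2 : ∑ l ∈ A, ((A.filter (fun x => t ≤ x)).filter (· < l)).card
        = ∑ l ∈ A.filter (fun x => t ≤ x),
            ((A.filter (fun x => t ≤ x)).filter (· < l)).card := by
      rw [← Finset.sum_filter_add_sum_filter_not A (fun x => t ≤ x)]
      have hz : ∀ l ∈ A.filter (fun x => ¬ t ≤ x),
          ((A.filter (fun x => t ≤ x)).filter (· < l)).card = 0 := by
        intro l hl
        simp only [Finset.mem_filter] at hl
        rw [Finset.card_eq_zero]
        ext x
        simp only [Finset.mem_filter, Finset.notMem_empty, iff_false, not_and]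
        rintro ⟨-, hx⟩ hlt
        omega
      rw [Finset.sum_eq_zero hz, add_zero]
    simp_rw [h1]
    rw [h2]
  calc ∑ t ∈ Icc 1 K, ((A.filter (fun x => t ≤ x)).card).choose 2
      = ∑ t ∈ Icc 1 K, ∑ l ∈ A, ∑ l' ∈ A.filter (· < l), (if t ≤ l' then 1 else 0) :=
        Finset.sum_congr rfl fun t _ => key t
    _ = ∑ l ∈ A, ∑ l' ∈ A.filter (· < l), ∑ t ∈ Icc 1 K, (if t ≤ l' then 1 else 0) := by
        rw [Finset.sum_comm]
        exact Finset.sum_congr rfl fun l _ => Finset.sum_comm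
    _ ≤ ∑ l ∈ A, ∑ l' ∈ A.filter (· < l), min l l' := by
        refine Finset.sum_le_sum fun l _ => Finset.sum_le_sum fun l' hl' => ?_
        simp only [Finset.mem_filter] at hl'
        calc ∑ t ∈ Icc 1 K, (if t ≤ l' then 1 else 0) ≤ l' := indic_le K l'
          _ = min l l' := (min_eq_right (le_of_lt hl'.2)).symm

lemma cross_ge (S T : Finset ℕ) (K : ℕ) :
    ∑ t ∈ Icc 1 K, (S.filter (fun x => t ≤ x)).card * (T.filter (fun x => t ≤ x)).card
      ≤ ∑ l ∈ S, ∑ m ∈ T, min l m := by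
  have key : ∀ t, (S.filter (fun x => t ≤ x)).card * (T.filter (fun x => t ≤ x)).card
      = ∑ l ∈ S, ∑ m ∈ T, (if t ≤ l then 1 else 0) * (if t ≤ m then 1 else 0) := by
    intro t
    rw [Finset.card_filter, Finset.card_filter, Finset.sum_mul_sum]
  calc ∑ t ∈ Icc 1 K, (S.filter (fun x => t ≤ x)).card * (T.filter (fun x => t ≤ x)).card
      = ∑ l ∈ S, ∑ m ∈ T, ∑ t ∈ Icc 1 K,
          (if t ≤ l then 1 else 0) * (if t ≤ m then 1 else 0) := by
        simp_rw [key]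
        rw [Finset.sum_comm]
        exact Finset.sum_congr rfl fun l _ => Finset.sum_comm
    _ ≤ ∑ l ∈ S, ∑ m ∈ T, min l m := by
        refine Finset.sum_le_sum fun l _ => Finset.sum_le_sum fun m _ => ?_
        calc ∑ t ∈ Icc 1 K, (if t ≤ l then 1 else 0) * (if t ≤ m then 1 else 0)
            = ∑ t ∈ Icc 1 K, (if t ≤ min l m then 1 else 0) := by
              refine Finset.sum_congr rfl fun t _ => ?_
              by_cases h1 : t ≤ l <;> by_cases h2 : t ≤ m <;>
                simp [h1, h2, le_min_iff]
          _ ≤ min l m := indic_le _ _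

lemma count_ge (S T : Finset ℕ) (h0 : 0 ∉ S ∩ T) (t : ℕ) (ht : 1 ≤ t) :
    S.card + T.card
      ≤ (S.filter (fun x => t ≤ x)).card + (T.filter (fun x => t ≤ x)).card + (2 * t - 1) := by
  have hS : (S.filter (fun x => t ≤ x)).card + (S.filter (fun x => ¬ t ≤ x)).card = S.card :=
    Finset.card_filter_add_card_filter_not _
  have hT : (T.filter (fun x => t ≤ x)).card + (T.filter (fun x => ¬ t ≤ x)).card = T.card :=
    Finset.card_filter_add_card_filter_not _
  set A := S.filter (fun x => ¬ t ≤ x) with hA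
  set B := T.filter (fun x => ¬ t ≤ x) with hB
  have hunion : (A ∪ B).card + (A ∩ B).card = A.card + B.card :=
    Finset.card_union_add_card_inter A B
  have h1 : (A ∪ B).card ≤ t := by
    calc (A ∪ B).card ≤ (Finset.range t).card := by
          refine Finset.card_le_card ?_
          intro x hx
          simp only [hA, hB, Finset.mem_union, Finset.mem_filter, Finset.mem_range] at hx ⊢
          omega
      _ = t := Finset.card_range t
  have h2 : (A ∩ B).card ≤ t - 1 := by
    calc (A ∩ B).card ≤ (Finset.Ico 1 t).card := by
          refine Finset.card_le_card ?_
          intro x hx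
          simp only [hA, hB, Finset.mem_inter, Finset.mem_filter, Finset.mem_Ico] at hx
          have hx0 : x ≠ 0 := by
            rintro rfl
            exact h0 (Finset.mem_inter.mpr ⟨hx.1.1, hx.2.1⟩)
          simp only [Finset.mem_Ico]
          omega
      _ = t - 1 := by rw [Nat.card_Ico]
  omega

lemma sum_even_choose (K : ℕ) :
    6 * (∑ j ∈ Icc 1 K, (2 * j).choose 2) + K * (K + 1) = 4 * K * K * (K + 1) := by
  induction K with
  | zero => simp
  | succ n ih =>
    rw [Finset.sum_Icc_succ_top (by omega : 1 ≤ n + 1)]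
    have hch : (2 * (n + 1)).choose 2 = (n + 1) * (2 * n + 1) := by
      rw [Nat.choose_two_right]
      have e1 : 2 * (n + 1) - 1 = 2 * n + 1 := by omega
      rw [e1]
      have e2 : 2 * (n + 1) * (2 * n + 1) = ((n + 1) * (2 * n + 1)) * 2 := by ring
      rw [e2, Nat.mul_div_cancel _ (by norm_num)]
    rw [hch]
    have hpoly : 4 * n * n * (n + 1) + (6 * ((n + 1) * (2 * n + 1)) + (n + 1) * (n + 1 + 1))
        = 4 * (n + 1) * (n + 1) * (n + 1 + 1) + n * (n + 1) := by ring
    linarith [ih, hpoly]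

lemma sum_reflect (K : ℕ) :
    ∑ t ∈ Icc 1 K, (2 * K + 2 - 2 * t).choose 2 = ∑ j ∈ Icc 1 K, (2 * j).choose 2 := by
  refine Finset.sum_nbij' (fun t => K + 1 - t) (fun j => K + 1 - j) ?_ ?_ ?_ ?_ ?_
  · intro a ha; simp only [Finset.mem_Icc] at ha ⊢; omega
  · intro a ha; simp only [Finset.mem_Icc] at ha ⊢; omega
  · intro a ha; simp only [Finset.mem_Icc] at ha; omega
  · intro a ha; simp only [Finset.mem_Icc] at ha; omega
  · intro a ha
    simp only [Finset.mem_Icc] at ha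
    congr 1
    omega

lemma core (S T : Finset ℕ) (h0 : 0 ∉ S ∩ T) (K : ℕ) (hM : S.card + T.card = 2 * K + 1) :
    4 * K * K * (K + 1) ≤ 6 * phiST S T + K * (K + 1) := by
  have hB : ∑ t ∈ Icc 1 K, (2 * K + 2 - 2 * t).choose 2
      ≤ ∑ t ∈ Icc 1 K,
          ((S.filter (fun x => t ≤ x)).card + (T.filter (fun x => t ≤ x)).card).choose 2 := by
    refine Finset.sum_le_sum fun t ht => Nat.choose_le_choose 2 ?_
    have ht1 : 1 ≤ t := (Finset.mem_Icc.mp ht).1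
    have := count_ge S T h0 t ht1
    omega
  have hsplit : ∑ t ∈ Icc 1 K,
        ((S.filter (fun x => t ≤ x)).card + (T.filter (fun x => t ≤ x)).card).choose 2
      = (∑ t ∈ Icc 1 K, ((S.filter (fun x => t ≤ x)).card).choose 2)
        + (∑ t ∈ Icc 1 K, ((T.filter (fun x => t ≤ x)).card).choose 2)
        + ∑ t ∈ Icc 1 K, (S.filter (fun x => t ≤ x)).card * (T.filter (fun x => t ≤ x)).card := by
    rw [← Finset.sum_add_distrib, ← Finset.sum_add_distrib]
    exact Finset.sum_congr rfl fun t _ => (choose_two_add _ _).symm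
  have hphi : ∑ t ∈ Icc 1 K,
        ((S.filter (fun x => t ≤ x)).card + (T.filter (fun x => t ≤ x)).card).choose 2
      ≤ phiST S T := by
    rw [hsplit]
    have h1 := pairs_ge S K
    have h2 := pairs_ge T K
    have h3 := cross_ge S T K
    unfold phiST
    omega
  have hsum := sum_even_choose K
  have hrefl := sum_reflect K
  omega


/-- Let `M ≥ 5` be odd, and let `S, T ⊆ ℕ` be finite with `0 ∉ S ∩ T` and
`|S| + |T| = M`. Then `φ_{S,T} ≥ (M−1)(2M²−7M+15)/24 + (M−1)(M−3)/4`; in particular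
`φ_{S,T} > (M−1)(2M²−7M+15)/24`. -/
theorem stmt_3 (M : ℕ) (hM5 : 5 ≤ M) (hModd : Odd M)
    (S T : Finset ℕ) (h0 : 0 ∉ S ∩ T) (hcard : S.card + T.card = M) :
    (((M : ℚ) - 1) * (2 * (M : ℚ) ^ 2 - 7 * (M : ℚ) + 15) / 24
        + ((M : ℚ) - 1) * ((M : ℚ) - 3) / 4 ≤ (phiST S T : ℚ))
      ∧ ((M : ℚ) - 1) * (2 * (M : ℚ) ^ 2 - 7 * (M : ℚ) + 15) / 24
          < (phiST S T : ℚ) := by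
  obtain ⟨K, hK⟩ := hModd
  have hcore := core S T h0 K (by omega)
  have hq : (4 * (K : ℚ) * K * (K + 1)) ≤ 6 * (phiST S T : ℚ) + K * (K + 1) := by
    exact_mod_cast hcore
  have hMq : (M : ℚ) = 2 * (K : ℚ) + 1 := by exact_mod_cast congrArg (Nat.cast (R := ℚ)) hK
  have hM5q : (5 : ℚ) ≤ (M : ℚ) := by exact_mod_cast hM5
  have htarget : ((M : ℚ) - 1) * (2 * (M : ℚ) ^ 2 - 7 * (M : ℚ) + 15) / 24
      + ((M : ℚ) - 1) * ((M : ℚ) - 3) / 4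
      = ((K : ℚ) * (K + 1) * (4 * K - 1)) / 6 := by
    rw [hMq]; ring
  have h1 : ((M : ℚ) - 1) * (2 * (M : ℚ) ^ 2 - 7 * (M : ℚ) + 15) / 24
      + ((M : ℚ) - 1) * ((M : ℚ) - 3) / 4 ≤ (phiST S T : ℚ) := by
    rw [htarget]; linarith
  refine ⟨h1, ?_⟩
  have hpos : 0 < ((M : ℚ) - 1) * ((M : ℚ) - 3) / 4 := by nlinarith
  linarith
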